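/- (Fragility of the price of anarchy) For any single-selection coverage game G with compromised agent set K and distance D(G) (the minimal ℓ1-norm of a nonnegative perturbation p to resource values such that the perturbed game has an optimal Nash equilibrium), the price of anarchy satisfies PoA(G) ≥ min{1/2, 1/(|K| + 1 − D(G))}. -/

import Mathlib

open Finset

variable {N R : Type} [Fintype N] [DecidableEq N] [Fintype R] [DecidableEq R]

/-- Welfare of the set of resources selected by agents in `J` under profile `a`. -/
def coveredValue (v : R → ℝ) (a : N → R) (J : Finset N) : ℝ :=
  ∑ r ∈ J.image a, v r

/-- Marginal-contribution utility: `U_i(a) = W(a) - W(∅, a_{-i})`. -/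
def utility (v : R → ℝ) (a : N → R) (i : N) : ℝ :=
  coveredValue v a Finset.univ - coveredValue v a (Finset.univ.erase i)

/-- A joint action profile: each agent selects an admissible resource. -/
def isProfile (A : N → Finset R) (a : N → R) : Prop :=
  ∀ i, a i ∈ A i

/-- Pure Nash equilibrium with compromised agent set `K`: normal agents have no
profitable unilateral deviation w.r.t. marginal-contribution utilities, and each
compromised agent selects a maximum-value resource of its action set. -/
def isNE (A : N → Finset R) (K : Finset N) (v : R → ℝ) (a : N → R) : Prop :=
  isProfile A a ∧
  (∀ i, i ∉ K → ∀ b ∈ A i, utility v (Function.update a i b) i ≤ utility v a i) ∧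
  (∀ j ∈ K, ∀ r ∈ A j, v r ≤ v (a j))

/-- Optimal welfare of the game. -/
noncomputable def optWelfare (A : N → Finset R) (v : R → ℝ) : ℝ :=
  sSup {w | ∃ a, isProfile A a ∧ w = coveredValue v a Finset.univ}

/-- Worst-case Nash equilibrium welfare. -/
noncomputable def worstNEWelfare (A : N → Finset R) (K : Finset N) (v : R → ℝ) : ℝ :=
  sInf {w | ∃ a, isNE A K v a ∧ w = coveredValue v a Finset.univ}

/-- Price of anarchy. -/
noncomputable def PoA (A : N → Finset R) (K : Finset N) (v : R → ℝ) : ℝ :=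
  worstNEWelfare A K v / optWelfare A v

/-- `PoS(G) = 1`: some Nash equilibrium is welfare-optimal. -/
def PoSoneHolds (A : N → Finset R) (K : Finset N) (v : R → ℝ) : Prop :=
  ∃ a, isNE A K v a ∧
    ∀ b, isProfile A b → coveredValue v b Finset.univ ≤ coveredValue v a Finset.univ

/-- Distance of the game: minimal ℓ1-norm of a nonnegative perturbation of the
resource values yielding a game with an optimal Nash equilibrium. -/
noncomputable def gameDist (A : N → Finset R) (K : Finset N) (v : R → ℝ) : ℝ :=
  sInf {c | ∃ p : R → ℝ, (∀ r, 0 ≤ p r) ∧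
    PoSoneHolds A K (fun r => v r + p r) ∧ c = ∑ r, p r}

set_option linter.unusedSectionVars false
set_option linter.unusedVariables false

lemma sum_image_le' {ι α : Type*} [DecidableEq ι] [DecidableEq α] (F : Finset ι) (f : ι → α) (g : α → ℝ)
    (hg : ∀ i ∈ F, 0 ≤ g (f i)) : ∑ x ∈ F.image f, g x ≤ ∑ i ∈ F, g (f i) := by
  induction F using Finset.induction_on with
  | empty => simp
  | insert _ _ hi ih =>
    rename_i i F
    rw [image_insert, sum_insert hi]
    by_cases h : f i ∈ F.image f
    · rw [insert_eq_self.mpr h]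
      have := ih (fun j hj => hg j (mem_insert_of_mem hj))
      have h0 : 0 ≤ g (f i) := hg i (mem_insert_self i F)
      linarith
    · rw [sum_insert h]
      have := ih (fun j hj => hg j (mem_insert_of_mem hj))
      linarith

lemma coveredValue_nonneg (v : R → ℝ) (hv : ∀ r, 0 ≤ v r) (a : N → R) (J : Finset N) :
    0 ≤ coveredValue v a J := Finset.sum_nonneg fun r _ => hv r

lemma coveredValue_mono (v : R → ℝ) (hv : ∀ r, 0 ≤ v r) (a : N → R) {J J' : Finset N}
    (h : J ⊆ J') : coveredValue v a J ≤ coveredValue v a J' :=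
  Finset.sum_le_sum_of_subset_of_nonneg (image_subset_image h) (fun r _ _ => hv r)

lemma coveredValue_congr {v : R → ℝ} {a b : N → R} {J : Finset N}
    (h : ∀ i ∈ J, a i = b i) : coveredValue v a J = coveredValue v b J := by
  unfold coveredValue
  rw [Finset.image_congr (fun i hi => h i hi)]

lemma coveredValue_insert (v : R → ℝ) (a : N → R) (i : N) (J : Finset N) :
    coveredValue v a (insert i J)
      = (if a i ∈ J.image a then 0 else v (a i)) + coveredValue v a J := by
  unfold coveredValue
  rw [image_insert]
  by_cases h : a i ∈ J.image a
  · rw [Finset.insert_eq_self.mpr h, if_pos h, zero_add]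
  · rw [Finset.sum_insert h, if_neg h]

lemma utility_eq (v : R → ℝ) (a : N → R) (i : N) :
    utility v a i = if a i ∈ (Finset.univ.erase i).image a then 0 else v (a i) := by
  have h2 : coveredValue v a Finset.univ
      = (if a i ∈ (Finset.univ.erase i).image a then 0 else v (a i))
        + coveredValue v a (Finset.univ.erase i) := by
    conv_lhs => rw [← Finset.insert_erase (Finset.mem_univ i)]
    exact coveredValue_insert v a i _
  unfold utility
  rw [h2]; ring

lemma coveredValue_update_erase (v : R → ℝ) (a : N → R) (i : N) (b : R) :
    coveredValue v (Function.update a i b) (Finset.univ.erase i)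
      = coveredValue v a (Finset.univ.erase i) :=
  coveredValue_congr fun x hx => Function.update_of_ne (Finset.ne_of_mem_erase hx) _ _

lemma utility_update_eq (v : R → ℝ) (a : N → R) (i : N) (b : R) :
    utility v (Function.update a i b) i
      = if b ∈ (Finset.univ.erase i).image a then 0 else v b := by
  rw [utility_eq]
  have h2 : (Finset.univ.erase i).image (Function.update a i b)
      = (Finset.univ.erase i).image a :=
    Finset.image_congr fun x hx => Function.update_of_ne (Finset.ne_of_mem_erase hx) _ _
  rw [Function.update_self, h2]

lemma utility_nonneg (v : R → ℝ) (hv : ∀ r, 0 ≤ v r) (a : N → R) (i : N) :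
    0 ≤ utility v a i := by
  rw [utility_eq]
  split
  · exact le_refl 0
  · exact hv _

lemma utility_le_welfare (v : R → ℝ) (hv : ∀ r, 0 ≤ v r) (a : N → R) (i : N) :
    utility v a i ≤ coveredValue v a Finset.univ := by
  unfold utility
  have := coveredValue_nonneg v hv a (Finset.univ.erase i)
  linarith

lemma sum_utility_le (v : R → ℝ) (hv : ∀ r, 0 ≤ v r) (a : N → R) (S : Finset N) :
    ∑ i ∈ S, utility v a i
      ≤ coveredValue v a Finset.univ - coveredValue v a (Finset.univ \ S) := by
  induction S using Finset.induction_on with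
  | empty => simp
  | insert _ _ hi ih =>
    rename_i i S
    have key : utility v a i
        ≤ coveredValue v a (Finset.univ \ S) - coveredValue v a ((Finset.univ \ S).erase i) := by
      have hiS : i ∈ Finset.univ \ S := by simp [hi]
      have h2 : coveredValue v a (Finset.univ \ S)
          = (if a i ∈ ((Finset.univ \ S).erase i).image a then 0 else v (a i))
            + coveredValue v a ((Finset.univ \ S).erase i) := by
        conv_lhs => rw [← Finset.insert_erase hiS]
        exact coveredValue_insert v a i _
      rw [utility_eq, h2]
      have hsub : ((Finset.univ \ S).erase i).image a ⊆ ((Finset.univ.erase i)).image a :=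
        Finset.image_subset_image (by
          intro x hx
          rcases Finset.mem_erase.mp hx with ⟨hxi, hxS⟩
          exact Finset.mem_erase.mpr ⟨hxi, Finset.mem_univ x⟩)
      by_cases h : a i ∈ ((Finset.univ \ S).erase i).image a
      · rw [if_pos h, if_pos (hsub h)]; simp
      · rw [if_neg h]
        split
        · simp [hv]
        · simp
    rw [Finset.sum_insert hi, Finset.sdiff_insert]
    linarith [ih]

lemma smoothness (v : R → ℝ) (hv : ∀ r, 0 ≤ v r) (A : N → Finset R) (K : Finset N)
    (a b : N → R) (hne : isNE A K v a) (hb : isProfile A b) :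
    coveredValue v b Finset.univ
      ≤ 2 * coveredValue v a Finset.univ - coveredValue v a K + ∑ j ∈ K, v (b j) := by
  classical
  set F : Finset N := Finset.univ.filter (fun i => b i ∉ Finset.univ.image a) with hF
  have him : Finset.univ.image b \ Finset.univ.image a = F.image b := by
    ext r
    simp only [Finset.mem_sdiff, Finset.mem_image, hF, Finset.mem_filter, Finset.mem_univ,
      true_and]
    constructor
    · rintro ⟨⟨i, rfl⟩, hr⟩; exact ⟨i, hr, rfl⟩
    · rintro ⟨i, hi, rfl⟩; exact ⟨⟨i, rfl⟩, hi⟩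
  have h1 : coveredValue v b Finset.univ
      ≤ coveredValue v a Finset.univ + ∑ r ∈ F.image b, v r := by
    have hsub : Finset.univ.image b
        ⊆ Finset.univ.image a ∪ (Finset.univ.image b \ Finset.univ.image a) := by
      intro r hr
      by_cases h : r ∈ Finset.univ.image a
      · exact Finset.mem_union_left _ h
      · exact Finset.mem_union_right _ (Finset.mem_sdiff.mpr ⟨hr, h⟩)
    calc coveredValue v b Finset.univ
        ≤ ∑ r ∈ Finset.univ.image a ∪ (Finset.univ.image b \ Finset.univ.image a), v r :=
          Finset.sum_le_sum_of_subset_of_nonneg hsub (fun r _ _ => hv r)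
      _ = coveredValue v a Finset.univ + ∑ r ∈ Finset.univ.image b \ Finset.univ.image a, v r :=
          Finset.sum_union Finset.disjoint_sdiff
      _ = coveredValue v a Finset.univ + ∑ r ∈ F.image b, v r := by rw [him]
  have h2 : ∑ r ∈ F.image b, v r ≤ ∑ i ∈ F, v (b i) :=
    sum_image_le' F b v (fun i _ => hv _)
  have h3 : ∑ i ∈ F, v (b i)
      = ∑ i ∈ F.filter (fun i => i ∉ K), v (b i) + ∑ i ∈ F.filter (fun i => i ∈ K), v (b i) := by
    rw [add_comm]
    exact (Finset.sum_filter_add_sum_filter_not F (fun i => i ∈ K) _).symm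
  have h4 : ∑ i ∈ F.filter (fun i => i ∉ K), v (b i)
      ≤ coveredValue v a Finset.univ - coveredValue v a K := by
    have h41 : ∑ i ∈ F.filter (fun i => i ∉ K), v (b i)
        ≤ ∑ i ∈ F.filter (fun i => i ∉ K), utility v a i := by
      apply Finset.sum_le_sum
      intro i hi
      rcases Finset.mem_filter.mp hi with ⟨hiF, hiK⟩
      have hbi : b i ∉ Finset.univ.image a := by
        have h' := hiF; rw [hF, Finset.mem_filter] at h'; exact h'.2
      have hnot : b i ∉ (Finset.univ.erase i).image a := fun h =>
        hbi (Finset.image_subset_image (Finset.erase_subset i Finset.univ) h)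
      have := hne.2.1 i hiK (b i) (hb i)
      rwa [utility_update_eq, if_neg hnot] at this
    have h42 : ∑ i ∈ F.filter (fun i => i ∉ K), utility v a i
        ≤ ∑ i ∈ Finset.univ \ K, utility v a i := by
      apply Finset.sum_le_sum_of_subset_of_nonneg
      · intro i hi
        rcases Finset.mem_filter.mp hi with ⟨-, hiK⟩
        exact Finset.mem_sdiff.mpr ⟨Finset.mem_univ i, hiK⟩
      · exact fun i _ _ => utility_nonneg v hv a i
    have h43 := sum_utility_le v hv a (Finset.univ \ K)
    have h44 : Finset.univ \ (Finset.univ \ K) = K := by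
      rw [Finset.sdiff_sdiff_self_left, Finset.univ_inter]
    rw [h44] at h43
    linarith
  have h5 : ∑ i ∈ F.filter (fun i => i ∈ K), v (b i) ≤ ∑ j ∈ K, v (b j) := by
    apply Finset.sum_le_sum_of_subset_of_nonneg
    · intro i hi; exact (Finset.mem_filter.mp hi).2
    · exact fun i _ _ => hv _
  linarith

lemma NE_welfare_ge_one (v : R → ℝ) (hv : ∀ r, 0 ≤ v r) (A : N → Finset R) (K : Finset N)
    (a : N → R) (hne : isNE A K v a) (hmax : ∃ i, ∃ r ∈ A i, v r = 1) :
    1 ≤ coveredValue v a Finset.univ := by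
  obtain ⟨i, r, hrA, hr1⟩ := hmax
  have hmem : ∀ s ∈ Finset.univ.image a, v s ≤ coveredValue v a Finset.univ := by
    intro s hs
    exact Finset.single_le_sum (fun t _ => hv t) hs
  by_cases hiK : i ∈ K
  · have h1 := hne.2.2 i hiK r hrA
    have h2 : a i ∈ Finset.univ.image a := Finset.mem_image_of_mem a (Finset.mem_univ i)
    have := hmem _ h2
    linarith [hr1 ▸ h1]
  · by_cases hcov : r ∈ Finset.univ.image a
    · have := hmem r hcov; linarith
    · have hnot : r ∉ (Finset.univ.erase i).image a := fun h =>
        hcov (Finset.image_subset_image (Finset.erase_subset i Finset.univ) h)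
      have h1 := hne.2.1 i hiK r hrA
      rw [utility_update_eq, if_neg hnot] at h1
      have h2 := utility_le_welfare v hv a i
      linarith

lemma exists_NE (A : N → Finset R) (hA : ∀ i, (A i).Nonempty) (K : Finset N) (v : R → ℝ) :
    ∃ a, isNE A K v a := by
  classical
  have hs : ∀ i : N, ∃ r ∈ A i, ∀ r' ∈ A i, v r' ≤ v r := fun i =>
    Finset.exists_max_image (A i) v (hA i)
  choose s hs1 hs2 using hs
  set Q : Finset (N → R) :=
    Finset.univ.filter (fun c : N → R => isProfile A c ∧ ∀ j ∈ K, c j = s j) with hQ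
  have hQne : Q.Nonempty := ⟨s, by
    rw [hQ, Finset.mem_filter]
    exact ⟨Finset.mem_univ s, fun i => hs1 i, fun j _ => rfl⟩⟩
  obtain ⟨c, hcQ, hcmax⟩ :=
    Finset.exists_max_image Q (fun c => coveredValue v c Finset.univ) hQne
  rw [hQ, Finset.mem_filter] at hcQ
  obtain ⟨-, hcP, hcK⟩ := hcQ
  refine ⟨c, hcP, ?_, ?_⟩
  · intro i hiK b hbA
    have hmem : Function.update c i b ∈ Q := by
      rw [hQ, Finset.mem_filter]
      refine ⟨Finset.mem_univ _, ?_, ?_⟩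
      · intro i'
        by_cases h : i' = i
        · subst h; rw [Function.update_self]; exact hbA
        · rw [Function.update_of_ne h]; exact hcP i'
      · intro j hjK
        rw [Function.update_of_ne (fun h => hiK (by rw [← h]; exact hjK))]
        exact hcK j hjK
    have hW := hcmax _ hmem
    unfold utility
    rw [coveredValue_update_erase]
    linarith
  · intro j hjK r hrA
    rw [hcK j hjK]
    exact hs2 j r hrA

lemma dist_le (A : N → Finset R) (K : Finset N) (v : R → ℝ)
    (hv0 : ∀ r, 0 ≤ v r)
    (a : N → R) (hne : isNE A K v a) (b : N → R) (hb : isProfile A b)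
    (hbopt : ∀ c, isProfile A c → coveredValue v c Finset.univ ≤ coveredValue v b Finset.univ)
    (j0 : N) (hj0 : j0 ∈ K) (hM : ∀ j ∈ K, v (a j) ≤ v (a j0)) :
    gameDist A K v ≤ ∑ j ∈ K, (v (a j0) - v (b j)) := by
  classical
  set M := v (a j0) with hMdef
  set S : Finset R := K.image b with hS
  set p : R → ℝ := fun r => if r ∈ S then M - v r else 0 with hp
  have hvb : ∀ j ∈ K, v (b j) ≤ M := fun j hj =>
    le_trans (hne.2.2 j hj (b j) (hb j)) (hM j hj)
  have hSle : ∀ r ∈ S, v r ≤ M := by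
    intro r hr
    rw [hS] at hr
    obtain ⟨j, hj, rfl⟩ := Finset.mem_image.mp hr
    exact hvb j hj
  have hp0 : ∀ r, 0 ≤ p r := by
    intro r
    rw [hp]
    dsimp only
    split
    · next h => linarith [hSle r h]
    · exact le_refl 0
  set v' : R → ℝ := fun r => v r + p r with hv'
  -- covered value under v' splits
  have hsplit : ∀ c : N → R, coveredValue v' c Finset.univ
      = coveredValue v c Finset.univ + ∑ r ∈ Finset.univ.image c, p r := by
    intro c
    unfold coveredValue
    rw [← Finset.sum_add_distrib]
  have hpsum : ∀ c : N → R, ∑ r ∈ Finset.univ.image c, p r ≤ ∑ r ∈ Finset.univ.image b, p r := by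
    intro c
    have hsub : Finset.univ.image c ∩ Finset.univ.image b ⊆ Finset.univ.image c :=
      Finset.inter_subset_left
    have h1 : ∑ r ∈ Finset.univ.image c ∩ Finset.univ.image b, p r
        = ∑ r ∈ Finset.univ.image c, p r := by
      apply Finset.sum_subset hsub
      intro r hr hrn
      have hrb : r ∉ Finset.univ.image b := fun h =>
        hrn (Finset.mem_inter.mpr ⟨hr, h⟩)
      have hrS : r ∉ S := fun h => by
        rw [hS] at h
        exact hrb (Finset.image_subset_image (Finset.subset_univ K) h)
      rw [hp]; exact if_neg hrS
    rw [← h1]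
    exact Finset.sum_le_sum_of_subset_of_nonneg Finset.inter_subset_right (fun r _ _ => hp0 r)
  have hbopt' : ∀ c, isProfile A c → coveredValue v' c Finset.univ ≤ coveredValue v' b Finset.univ := by
    intro c hc
    rw [hsplit c, hsplit b]
    have := hbopt c hc
    have := hpsum c
    linarith
  have hPoS : PoSoneHolds A K v' := by
    refine ⟨b, ⟨hb, ?_, ?_⟩, hbopt'⟩
    · intro i hiK r hrA
      have hprof : isProfile A (Function.update b i r) := by
        intro i'
        by_cases h : i' = i
        · subst h; rw [Function.update_self]; exact hrA
        · rw [Function.update_of_ne h]; exact hb i'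
      have hW := hbopt' _ hprof
      unfold utility
      rw [coveredValue_update_erase]
      linarith
    · intro j hjK r hrA
      have hbjS : b j ∈ S := hS ▸ Finset.mem_image_of_mem b hjK
      have hvbj : v' (b j) = M := by
        rw [hv']; dsimp only; rw [hp]; dsimp only; rw [if_pos hbjS]; ring
      rw [hvbj, hv']
      dsimp only
      rw [hp]; dsimp only
      split
      · next h => linarith
      · next h =>
        have := hne.2.2 j hjK r hrA
        have := hM j hjK
        linarith
  have hmem : (∑ r, p r) ∈ {c | ∃ p : R → ℝ, (∀ r, 0 ≤ p r) ∧
      PoSoneHolds A K (fun r => v r + p r) ∧ c = ∑ r, p r} := ⟨p, hp0, hPoS, rfl⟩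
  have hbdd : BddBelow {c | ∃ p : R → ℝ, (∀ r, 0 ≤ p r) ∧
      PoSoneHolds A K (fun r => v r + p r) ∧ c = ∑ r, p r} := by
    refine ⟨0, ?_⟩
    rintro x ⟨q, hq0, -, rfl⟩
    exact Finset.sum_nonneg (fun r _ => hq0 r)
  have h1 : gameDist A K v ≤ ∑ r, p r := csInf_le hbdd hmem
  have h2 : ∑ r, p r = ∑ r ∈ S, (M - v r) := by
    rw [hp]
    rw [Finset.sum_ite_mem]
    rw [Finset.univ_inter]
  have h3 : ∑ r ∈ S, (M - v r) ≤ ∑ j ∈ K, (M - v (b j)) := by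
    rw [hS]
    exact sum_image_le' K b (fun r => M - v r) (fun j hj => sub_nonneg.mpr (hvb j hj))
  calc gameDist A K v ≤ ∑ r, p r := h1
    _ = ∑ r ∈ S, (M - v r) := h2
    _ ≤ ∑ j ∈ K, (M - v (b j)) := h3

theorem poa_fragility_aux (A : N → Finset R) (K : Finset N) (v : R → ℝ)
    (hA : ∀ i, (A i).Nonempty)
    (hv0 : ∀ r, 0 ≤ v r) (hv1 : ∀ r, v r ≤ 1)
    (hmax : ∃ i, ∃ r ∈ A i, v r = 1) :
    min (1 / 2) (1 / ((K.card : ℝ) + 1 - gameDist A K v)) ≤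
      sInf {w | ∃ a, isNE A K v a ∧ w = coveredValue v a Finset.univ} /
      sSup {w | ∃ a, isProfile A a ∧ w = coveredValue v a Finset.univ} := by
  classical
  set D := gameDist A K v with hDdef
  set Ws : Set ℝ := {w | ∃ a, isProfile A a ∧ w = coveredValue v a Finset.univ} with hWs
  set NWs : Set ℝ := {w | ∃ a, isNE A K v a ∧ w = coveredValue v a Finset.univ} with hNWs
  have hWfin : Ws.Finite :=
    Set.Finite.subset (Set.finite_range (fun a : N → R => coveredValue v a Finset.univ))
      (by rintro w ⟨a, -, rfl⟩; exact ⟨a, rfl⟩)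
  have hWne : Ws.Nonempty :=
    ⟨coveredValue v (fun i => (hA i).choose) Finset.univ,
      ⟨fun i => (hA i).choose, fun i => (hA i).choose_spec, rfl⟩⟩
  have hsup_mem : sSup Ws ∈ Ws := hWne.csSup_mem hWfin
  obtain ⟨b, hb, hbeq⟩ := hsup_mem
  have hub : ∀ c, isProfile A c → coveredValue v c Finset.univ ≤ sSup Ws :=
    fun c hc => le_csSup hWfin.bddAbove ⟨c, hc, rfl⟩
  have hbopt : ∀ c, isProfile A c →
      coveredValue v c Finset.univ ≤ coveredValue v b Finset.univ :=
    fun c hc => hbeq ▸ hub c hc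
  obtain ⟨a0, ha0⟩ := exists_NE A hA K v
  have hNne : NWs.Nonempty := ⟨coveredValue v a0 Finset.univ, a0, ha0, rfl⟩
  have hopt1 : 1 ≤ sSup Ws :=
    le_trans (NE_welfare_ge_one v hv0 A K a0 ha0 hmax) (hub a0 ha0.1)
  have hoptpos : (0:ℝ) < sSup Ws := by linarith
  have key : ∀ w ∈ NWs, min (1 / 2) (1 / ((K.card : ℝ) + 1 - D)) * sSup Ws ≤ w := by
    rintro w ⟨a, hne, rfl⟩
    set W := coveredValue v a Finset.univ with hWdef
    have hw1 : 1 ≤ W := NE_welfare_ge_one v hv0 A K a hne hmax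
    have hwopt : W ≤ sSup Ws := hub a hne.1
    have hsm := smoothness v hv0 A K a b hne hb
    rw [← hbeq] at hsm
    by_cases h2 : sSup Ws ≤ 2 * W
    · have hmin : min (1 / 2) (1 / ((K.card : ℝ) + 1 - D)) ≤ 1 / 2 := min_le_left _ _
      have := mul_le_mul_of_nonneg_right hmin (le_of_lt hoptpos)
      calc min (1 / 2) (1 / ((K.card : ℝ) + 1 - D)) * sSup Ws
          ≤ (1 / 2) * sSup Ws := this
        _ ≤ W := by linarith
    · push_neg at h2
      have hK : K.Nonempty := by
        by_contra hKe
        rw [Finset.not_nonempty_iff_eq_empty] at hKe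
        subst hKe
        simp only [Finset.sum_empty] at hsm
        have : coveredValue v a (∅ : Finset N) = 0 := by
          unfold coveredValue; rw [Finset.image_empty, Finset.sum_empty]
        rw [this] at hsm
        linarith
      obtain ⟨j0, hj0K, hMmax⟩ := Finset.exists_max_image K (fun j => v (a j)) hK
      set M := v (a j0) with hMdef
      have hM1 : M ≤ 1 := hv1 _
      have hM0 : 0 ≤ M := hv0 _
      have hMW : M ≤ coveredValue v a K :=
        Finset.single_le_sum (fun r _ => hv0 r) (Finset.mem_image_of_mem a hj0K)
      have hdist : D ≤ ∑ j ∈ K, (M - v (b j)) :=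
        dist_le A K v hv0 a hne b hb hbopt j0 hj0K hMmax
      have hsum : ∑ j ∈ K, (M - v (b j)) = (K.card : ℝ) * M - ∑ j ∈ K, v (b j) := by
        rw [Finset.sum_sub_distrib, Finset.sum_const, nsmul_eq_mul]
      rw [hsum] at hdist
      set k := (K.card : ℝ) with hkdef
      have hk1 : (1:ℝ) ≤ k := by
        rw [hkdef]
        exact_mod_cast Finset.card_pos.mpr hK
      have hwpos : (0:ℝ) < W := by linarith
      set q := sSup Ws / W with hqdef
      have hq : q * W = sSup Ws := div_mul_cancel₀ _ (ne_of_gt hwpos)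
      have hq2 : 2 ≤ q := by
        rw [hqdef, le_div_iff₀ hwpos]
        linarith
      have hDle : D ≤ k + 1 - q := by
        nlinarith [mul_nonneg (by linarith : (0:ℝ) ≤ k - 1) (by linarith : (0:ℝ) ≤ 1 - M),
          mul_nonneg (by linarith : (0:ℝ) ≤ W - 1) (by linarith : (0:ℝ) ≤ q - 2)]
      have hpos : 0 < k + 1 - D := by linarith
      have hfin : sSup Ws ≤ (k + 1 - D) * W := by
        nlinarith [mul_le_mul_of_nonneg_right (by linarith : q ≤ k + 1 - D) (le_of_lt hwpos)]
      have hmin : min (1 / 2) (1 / (k + 1 - D)) ≤ 1 / (k + 1 - D) := min_le_right _ _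
      calc min (1 / 2) (1 / (k + 1 - D)) * sSup Ws
          ≤ (1 / (k + 1 - D)) * sSup Ws :=
            mul_le_mul_of_nonneg_right hmin (le_of_lt hoptpos)
        _ = sSup Ws / (k + 1 - D) := one_div_mul_eq_div _ _
        _ ≤ W := (div_le_iff₀ hpos).mpr (by linarith [hfin])
  have hInf : min (1 / 2) (1 / ((K.card : ℝ) + 1 - D)) * sSup Ws ≤ sInf NWs :=
    le_csInf hNne key
  exact (le_div_iff₀ hoptpos).mpr hInf


/-- Fragility of the price of anarchy (main theorem): for any coverage game with
compromised agent set `K` and distance `D(G)`,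
`PoA(G) ≥ min{1/2, 1/(|K| + 1 − D(G))}`. -/
theorem poa_fragility (A : N → Finset R) (K : Finset N) (v : R → ℝ)
    (hA : ∀ i, (A i).Nonempty)
    (hv0 : ∀ r, 0 ≤ v r) (hv1 : ∀ r, v r ≤ 1)
    (hmax : ∃ i, ∃ r ∈ A i, v r = 1) :
    min (1 / 2) (1 / ((K.card : ℝ) + 1 - gameDist A K v)) ≤ PoA A K v := by
  unfold PoA worstNEWelfare optWelfare
  exact poa_fragility_aux A K v hA hv0 hv1 hmax
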